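/- arXiv:1612.02910 — 4 statements merged into one kernel-verified Lean document; each statement's English description precedes it below -/
import Mathlib

section
/- Let G be a finite group, χ the character of a finite-dimensional complex representation of G, and H a subgroup of G such that χ(h) ≠ 0 for every h ∈ H. If g₁, …, g_k are elements of G such that χ(g_j · g_i⁻¹) = 0 for all i ≠ j, then k ≤ [G : H], the index of H in G. -/
open CategoryTheory

/-- If `χ` is the character of a finite-dimensional complex representation of a finite group `G`,
`H` is a subgroup on which `χ` never vanishes, and `g₁, …, g_k` are elements of `G` with
`χ(g_j g_i⁻¹) = 0` for all `i ≠ j`, then `k ≤ [G : H]`. -/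
theorem card_le_index_of_character
    {G : Type} [Group G] [Finite G]
    (V : FDRep ℂ G) (H : Subgroup G)
    (hH : ∀ h ∈ H, V.character h ≠ 0)
    {k : ℕ} (g : Fin k → G)
    (hg : ∀ i j : Fin k, i ≠ j → V.character (g j * (g i)⁻¹) = 0) :
    k ≤ H.index := by
  have hinj : Function.Injective (fun i : Fin k => (QuotientGroup.mk (g i)⁻¹ : G ⧸ H)) := by
    intro i j hij
    by_contra hne
    have hmem : (g i) * (g j)⁻¹ ∈ H := by
      have := (QuotientGroup.eq (s := H)).mp hij
      simpa using this
    exact hH _ hmem (hg j i (fun h => hne (h ▸ rfl)))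
  calc k = Nat.card (Fin k) := by simp
    _ ≤ Nat.card (G ⧸ H) := Nat.card_le_card_of_injective _ hinj
    _ = H.index := rfl
end

section
/- Let G be a finite group and χ an irreducible complex character of G. Suppose there exists a subgroup H of G such that χ(h) ≠ 0 for every h ∈ H and [G : H] < χ(1)². Then there do not exist χ(1)² elements g₁, …, g_{χ(1)²} of G satisfying χ(g_j · g_i⁻¹) = 0 for all i ≠ j. (This is the character-level form of: if some α ∈ Γ_{m,n} has trivial stabilizer G_α = {e}, then the symmetry class V_χ(G) admits no orthogonal ∗-basis.) -/
open CategoryTheory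

/-- Let `χ` be an irreducible complex character of a finite group `G`.  If there is a subgroup
`H` of `G` with `χ(h) ≠ 0` for all `h ∈ H` and `[G : H] < χ(1)²`, then there do not exist
`χ(1)²` elements `g₁, …, g_{χ(1)²}` of `G` with `χ(g_j g_i⁻¹) = 0` for all `i ≠ j`
(equivalently, `V_χ(G)` has no orthogonal ∗-basis when some `α` has trivial stabilizer). -/
theorem no_orthogonal_family_of_index_lt_degree_sq
    {G : Type} [Group G] [Finite G]
    (V : FDRep ℂ G) [Simple V] (H : Subgroup G)
    (hH : ∀ h ∈ H, V.character h ≠ 0)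
    (hind : H.index < (Module.finrank ℂ V) ^ 2) :
    ¬ ∃ g : Fin ((Module.finrank ℂ V) ^ 2) → G,
        ∀ i j, i ≠ j → V.character (g j * (g i)⁻¹) = 0 := by
  rintro ⟨g, hg⟩
  classical
  have := Fintype.ofFinite G
  have := Fintype.ofFinite (G ⧸ H)
  have hcard : Fintype.card (G ⧸ H) < Fintype.card (Fin ((Module.finrank ℂ V) ^ 2)) := by
    simpa [Subgroup.index, Nat.card_eq_fintype_card] using hind
  obtain ⟨i, j, hne, heq⟩ :=
    Fintype.exists_ne_map_eq_of_card_lt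
      (fun i : Fin ((Module.finrank ℂ V) ^ 2) => (QuotientGroup.mk (g i)⁻¹ : G ⧸ H)) hcard
  have hmem : g i * (g j)⁻¹ ∈ H := by
    have := QuotientGroup.eq.mp heq
    simpa using this
  exact hH _ hmem (hg j i hne.symm)
end

section
/- Let s be an odd positive integer and let χ be an irreducible complex character of the dihedral group D_{2s} of order 2s. Then there exist χ(1)² elements g₁, …, g_{χ(1)²} of D_{2s} with χ(g_j · g_i⁻¹) = 0 for all i ≠ j if and only if χ(1) = 1. (Character-level form of: for dim V = n > 1, the symmetry class V_χ(D_{2s}) admits an orthogonal ∗-basis if and only if χ is linear.) -/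
open CategoryTheory

/-- A `2×2` complex matrix with `A ^ s = 1`, `s` odd, has nonzero trace. -/
lemma aux_matrix_trace_ne_zero {s : ℕ} (hs : Odd s) (A : Matrix (Fin 2) (Fin 2) ℂ)
    (hA : A ^ s = 1) : Matrix.trace A ≠ 0 := by
  intro htr
  obtain ⟨m, hm⟩ := hs
  have h11 : A 1 1 = -A 0 0 := by
    have h : A 0 0 + A 1 1 = 0 := by
      simpa [Matrix.trace, Fin.sum_univ_two] using htr
    linear_combination h
  set e : ℂ := A 0 0 ^ 2 + A 0 1 * A 1 0 with he
  have h2 : A * A = e • (1 : Matrix (Fin 2) (Fin 2) ℂ) := by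
    ext i j
    fin_cases i <;> fin_cases j <;>
      simp [Matrix.mul_apply, Fin.sum_univ_two, Matrix.one_apply, h11, he] <;> ring
  have hpow : A ^ s = (e ^ m) • A := by
    rw [hm, pow_succ, pow_mul, pow_two, h2, smul_pow, one_pow, Matrix.smul_mul, one_mul]
  rw [hpow] at hA
  have := congrArg Matrix.trace hA
  rw [Matrix.trace_smul, htr, smul_zero, Matrix.trace_one] at this
  simp at this

lemma aux_pow_eig {M : Type} [AddCommGroup M] [Module ℂ M] (f : Module.End ℂ M)
    {c : ℂ} {v : M} (hv : f v = c • v) : ∀ m : ℕ, (f ^ m) v = c ^ m • v := by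
  intro m
  induction m with
  | zero => simp
  | succ n ih =>
      rw [pow_succ, Module.End.mul_apply, hv, map_smul, ih, smul_smul, pow_succ]
      ring_nf

lemma aux_nontrivial (G : Type) [Monoid G] (V : FDRep ℂ G) [Simple V] : Nontrivial V := by
  rcases subsingleton_or_nontrivial V with h | h
  · exfalso
    apply CategoryTheory.id_nonzero V
    apply Action.hom_ext
    exact FGModuleCat.hom_ext (LinearMap.ext fun x => @Subsingleton.elim _ h _ _)
  · exact h

open DihedralGroup in
lemma aux_finrank_le_two {s : ℕ} [NeZero s] (V : FDRep ℂ (DihedralGroup s)) [Simple V] :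
    Module.finrank ℂ V ≤ 2 := by
  have : Nontrivial V := aux_nontrivial _ V
  obtain ⟨c, hc⟩ := Module.End.exists_eigenvalue (V.ρ (r 1))
  obtain ⟨v, hv⟩ := hc.exists_hasEigenvector
  have hv0 : v ≠ 0 := hv.2
  have hvc : V.ρ (r 1) v = c • v := hv.apply_eq_smul
  -- action of rotations on v
  have hrv : ∀ j : ZMod s, V.ρ (r j) v = c ^ j.val • v := by
    intro j
    have hj : (r j : DihedralGroup s) = r 1 ^ j.val := by
      rw [r_one_pow, ZMod.natCast_val, ZMod.cast_id]
    rw [hj, map_pow]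
    exact aux_pow_eig _ hvc j.val
  set w : V := V.ρ (sr 0) v with hw
  have hsrv : ∀ j : ZMod s, V.ρ (sr j) v = c ^ j.val • w := by
    intro j
    have hj : (sr j : DihedralGroup s) = sr 0 * r j := by simp
    rw [hj, map_mul, Module.End.mul_apply, hrv, map_smul, hw]
  have hrw : ∀ j : ZMod s, V.ρ (r j) w = c ^ (-j).val • w := by
    intro j
    have hj : (r j * sr 0 : DihedralGroup s) = sr (-j) := by simp [zero_sub]
    rw [hw, ← Module.End.mul_apply, ← map_mul, hj, hsrv]
  have hsrw : ∀ j : ZMod s, V.ρ (sr j) w = c ^ (-j).val • v := by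
    intro j
    have hj : (sr j * sr 0 : DihedralGroup s) = r (-j) := by simp [zero_sub]
    rw [hw, ← Module.End.mul_apply, ← map_mul, hj, hrv]
  -- the invariant subspace
  set p : Submodule ℂ V := Submodule.span ℂ {v, w} with hp
  have hvp : v ∈ p := Submodule.subset_span (Set.mem_insert _ _)
  have hwp : w ∈ p := Submodule.subset_span (Set.mem_insert_iff.mpr (Or.inr rfl))
  have hinv : ∀ g : DihedralGroup s, ∀ x ∈ p, V.ρ g x ∈ p := by
    intro g
    have : p ≤ p.comap (V.ρ g) := by
      rw [hp, Submodule.span_le]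
      rintro x hx
      simp only [Set.mem_insert_iff, Set.mem_singleton_iff] at hx
      simp only [SetLike.mem_coe, Submodule.mem_comap]
      rcases hx with rfl | rfl <;> cases g with
        | r j =>
            first
              | (rw [hrv j]; exact p.smul_mem _ hvp)
              | (rw [hrw j]; exact p.smul_mem _ hwp)
        | sr j =>
            first
              | (rw [hsrv j]; exact p.smul_mem _ hwp)
              | (rw [hsrw j]; exact p.smul_mem _ hvp)
    intro x hx
    exact this hx
  -- the subrepresentation
  let ρ' : Representation ℂ (DihedralGroup s) p :=
    { toFun := fun g => (V.ρ g).restrict (hinv g)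
      map_one' := by
        ext x
        simp [LinearMap.restrict_apply]
      map_mul' := fun g h => by
        ext x
        simp [LinearMap.restrict_apply] }
  let W : FDRep ℂ (DihedralGroup s) := FDRep.of ρ'
  let ι : W ⟶ V :=
    { hom := FGModuleCat.ofHom (p.subtype : W.V →ₗ[ℂ] V.V)
      comm := fun g => by
        ext x
        rfl }
  have hmono : Mono ι := by
    constructor
    intro Z u u' huv
    apply Action.hom_ext
    apply FGModuleCat.hom_ext
    apply LinearMap.ext
    intro x
    have := congrArg Action.Hom.hom huv
    have h2 : (u.hom ≫ ι.hom) x = (u'.hom ≫ ι.hom) x := by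
      rw [← Action.comp_hom, this, Action.comp_hom]
    exact Subtype.ext h2
  have hne : ι ≠ 0 := by
    intro h
    apply hv0
    have := congrArg Action.Hom.hom h
    have h2 : ι.hom ⟨v, hvp⟩ = (0 : W ⟶ V).hom ⟨v, hvp⟩ := by rw [this]
    exact h2
  have : IsIso ι := isIso_of_mono_of_nonzero hne
  have heq : Module.finrank ℂ V = Module.finrank ℂ p := by
    have e := (FDRep.isoToLinearEquiv (asIso ι)).symm
    exact e.finrank_eq
  rw [heq, hp]
  classical
  have h1 : Module.finrank ℂ (Submodule.span ℂ ({v, w} : Set V)) ≤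
      ({v, w} : Set V).toFinset.card := finrank_span_le_card _
  refine h1.trans ?_
  have h2 : ({v, w} : Set V).toFinset ⊆ {v, w} := by
    intro x hx
    simpa using (Set.mem_toFinset.mp hx)
  exact (Finset.card_le_card h2).trans ((Finset.card_insert_le _ _).trans (by simp))

/-- Let `s` be an odd positive integer and `χ` an irreducible complex character of the dihedral
group `D_{2s}`.  Then there exist `χ(1)²` elements `g₁, …, g_{χ(1)²}` of `D_{2s}` with
`χ(g_j g_i⁻¹) = 0` for all `i ≠ j` iff `χ(1) = 1` (the character-level form of:
`V_χ(D_{2s})` admits an o*-basis iff `χ` is linear). -/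
theorem dihedral_orthogonal_family_iff_linear
    {s : ℕ} (hs : Odd s) (hs' : 0 < s)
    (V : FDRep ℂ (DihedralGroup s)) [Simple V] :
    (∃ g : Fin ((Module.finrank ℂ V) ^ 2) → DihedralGroup s,
        ∀ i j, i ≠ j → V.character (g j * (g i)⁻¹) = 0) ↔ Module.finrank ℂ V = 1 := by
  haveI : NeZero s := ⟨hs'.ne'⟩
  constructor
  · rintro ⟨g, hg⟩
    haveI : Nontrivial V := aux_nontrivial _ V
    have hn1 : 0 < Module.finrank ℂ V := Module.finrank_pos
    have hn2 : Module.finrank ℂ V ≤ 2 := aux_finrank_le_two V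
    by_contra hne1
    have hn : Module.finrank ℂ V = 2 := by omega
    -- pigeonhole: two elements in the same coset of the rotation subgroup
    let φ : DihedralGroup s → Bool := fun x =>
      match x with
      | .r _ => false
      | .sr _ => true
    obtain ⟨i, j, hij, hφ⟩ := Fintype.exists_ne_map_eq_of_card_lt (φ ∘ g)
      (by simp [hn, Fintype.card_fin])
    obtain ⟨k, hk⟩ : ∃ k : ZMod s, g j * (g i)⁻¹ = DihedralGroup.r k := by
      rcases hgi : g i with a | a <;> rcases hgj : g j with b | b <;>
        simp only [Function.comp_apply, hgi, hgj, φ] at hφ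
      · refine ⟨b - a, ?_⟩
        rw [mul_inv_eq_iff_eq_mul, DihedralGroup.r_mul_r, sub_add_cancel]
      · exact absurd hφ (by simp)
      · exact absurd hφ (by simp)
      · refine ⟨a - b, ?_⟩
        rw [mul_inv_eq_iff_eq_mul, DihedralGroup.r_mul_sr]
        congr 1
        ring
    have h0 : V.character (DihedralGroup.r k) = 0 := by
      rw [← hk]; exact hg i j hij
    -- translate into a matrix statement
    set f : Module.End ℂ V := V.ρ (DihedralGroup.r k) with hf
    have hfs : f ^ s = 1 := by
      rw [hf, ← map_pow, ← map_one V.ρ]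
      congr 1
      have : (DihedralGroup.r k : DihedralGroup s) = DihedralGroup.r 1 ^ k.val := by
        rw [DihedralGroup.r_one_pow, ZMod.natCast_val, ZMod.cast_id]
      rw [this, ← pow_mul, mul_comm, pow_mul, DihedralGroup.r_one_pow, ZMod.natCast_self,
        ← DihedralGroup.one_def, one_pow]
    let b2 : Module.Basis (Fin 2) ℂ V := Module.finBasisOfFinrankEq ℂ V hn
    set A : Matrix (Fin 2) (Fin 2) ℂ := LinearMap.toMatrix b2 b2 f with hA
    have hA1 : A ^ s = 1 := by
      have : A = LinearMap.toMatrixAlgEquiv b2 f := rfl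
      rw [this, ← map_pow, hfs, map_one]
    have htr : Matrix.trace A = 0 := by
      rw [hA, ← LinearMap.trace_eq_matrix_trace]
      exact h0
    exact aux_matrix_trace_ne_zero hs A hA1 htr
  · intro h
    refine ⟨fun _ => 1, fun i j hij => absurd ?_ hij⟩
    have hpow : (Module.finrank ℂ V) ^ 2 = 1 := by rw [h]; norm_num
    have hi : (i : ℕ) < 1 := lt_of_lt_of_le i.isLt hpow.le
    have hj : (j : ℕ) < 1 := lt_of_lt_of_le j.isLt hpow.le
    exact Fin.ext (by omega)
end

section
/- Let p and q be primes with p dividing q − 1, let G be a non-abelian group of order p·q, and let χ be an irreducible complex character of G. Then there exist χ(1)² elements g₁, …, g_{χ(1)²} of G with χ(g_j · g_i⁻¹) = 0 for all i ≠ j if and only if χ(1) = 1. (Character-level form of: for dim V = n > 1, the symmetry class V_χ(G) admits an orthogonal ∗-basis if and only if χ is linear.) -/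
open CategoryTheory Polynomial Matrix

/-- A vanishing sum of `ℓ`-th roots of unity (`ℓ` prime) has length divisible by `ℓ`. -/
lemma aux_prime_dvd_card_of_sum_eq_zero {ℓ : ℕ} (hl : ℓ.Prime) {S : Multiset ℂ}
    (h1 : ∀ μ ∈ S, μ ^ ℓ = 1) (h0 : S.sum = 0) : ℓ ∣ Multiset.card S := by
  haveI : Fact ℓ.Prime := ⟨hl⟩
  haveI : NeZero ℓ := ⟨hl.ne_zero⟩
  set ζ : ℂ := Complex.exp (2 * Real.pi * Complex.I / ℓ) with hζdef
  have hζ : IsPrimitiveRoot ζ ℓ := Complex.isPrimitiveRoot_exp ℓ hl.ne_zero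
  obtain ⟨E, rfl⟩ : ∃ E : Multiset ℕ, S = E.map (fun i => ζ ^ i) := by
    clear h0
    induction S using Multiset.induction_on with
    | empty => exact ⟨0, by simp⟩
    | cons μ S ih =>
      obtain ⟨E, hE⟩ := ih (fun x hx => h1 x (Multiset.mem_cons_of_mem hx))
      obtain ⟨i, _, hi⟩ := hζ.eq_pow_of_pow_eq_one (h1 μ (Multiset.mem_cons_self _ _))
      exact ⟨i ::ₘ E, by rw [Multiset.map_cons, hi, hE]⟩
  set P : Polynomial ℤ := (E.map (fun i => (X : ℤ[X]) ^ i)).sum with hP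
  have hPeval : (Polynomial.aeval ζ) P = 0 := by
    have : (Polynomial.aeval ζ) P = (E.map (fun i => ζ ^ i)).sum := by
      rw [hP, map_multiset_sum, Multiset.map_map]
      congr 1
      apply Multiset.map_congr rfl
      intro i _
      simp
    rw [this, h0]
  have hmin : minpoly ℚ ζ ∣ P.map (algebraMap ℤ ℚ) := by
    apply minpoly.dvd
    rw [Polynomial.aeval_map_algebraMap]
    exact hPeval
  rw [← Polynomial.cyclotomic_eq_minpoly_rat hζ hl.pos, ← Polynomial.map_cyclotomic_int ℓ ℚ]
    at hmin
  have hdvd : Polynomial.cyclotomic ℓ ℤ ∣ P := by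
    have hinj : Function.Injective (algebraMap ℤ ℚ) := fun a b h => by exact_mod_cast h
    exact (Polynomial.map_dvd_map (algebraMap ℤ ℚ) hinj (Polynomial.cyclotomic.monic ℓ ℤ)).mp hmin
  obtain ⟨C, hC⟩ := hdvd
  have h1eval : P.eval 1 = (Multiset.card E : ℤ) := by
    have h' : P.eval 1 = (Polynomial.evalRingHom (1:ℤ)) P := rfl
    rw [h', hP, map_multiset_sum, Multiset.map_map]
    simp [Function.comp, Multiset.map_const', Multiset.sum_replicate]
  have hl2 : (ℓ : ℤ) ∣ (Multiset.card E : ℤ) := by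
    rw [← h1eval, hC, Polynomial.eval_mul, Polynomial.eval_one_cyclotomic_prime]
    exact Dvd.intro _ rfl
  have := Int.ofNat_dvd.mp (by exact_mod_cast hl2)
  simpa using this

/-- Roots of the characteristic polynomial of a matrix `M` with `M ^ n = 1` are `n`-th roots
of unity. -/
lemma aux_root_pow_eq_one {m n : ℕ} (M : Matrix (Fin m) (Fin m) ℂ) (hM : M ^ n = 1)
    {μ : ℂ} (hμ : μ ∈ M.charpoly.roots) : μ ^ n = 1 := by
  have hne : M.charpoly ≠ 0 := M.charpoly_monic.ne_zero
  have hroot : M.charpoly.eval μ = 0 := (Polynomial.mem_roots hne).mp hμ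
  have hdet : (μ • (1 : Matrix (Fin m) (Fin m) ℂ) - M).det = 0 := by
    have key : M.charpoly.eval μ = (μ • (1 : Matrix (Fin m) (Fin m) ℂ) - M).det := by
      rw [Matrix.charpoly, ← Polynomial.coe_evalRingHom, RingHom.map_det]
      congr 1
      ext i j
      by_cases h : i = j
      · subst h
        simp [Matrix.charmatrix_apply_eq, Matrix.one_apply_eq]
      · simp [Matrix.charmatrix_apply_ne _ _ _ h, Matrix.one_apply_ne h]
    rw [← key, hroot]
  obtain ⟨v, hv0, hv⟩ := Matrix.exists_mulVec_eq_zero_iff.mpr hdet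
  have hMv : M *ᵥ v = μ • v := by
    have h1 : (μ • (1 : Matrix (Fin m) (Fin m) ℂ) - M) *ᵥ v
        = μ • v - M *ᵥ v := by
      rw [Matrix.sub_mulVec, Matrix.smul_mulVec, Matrix.one_mulVec]
    rw [h1] at hv
    exact (sub_eq_zero.mp hv).symm
  have hk : ∀ k : ℕ, (M ^ k) *ᵥ v = (μ ^ k) • v := by
    intro k
    induction k with
    | zero => simp [Matrix.one_mulVec]
    | succ k ih =>
      rw [pow_succ', ← Matrix.mulVec_mulVec, ih, Matrix.mulVec_smul, hMv, pow_succ',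
        smul_smul]
      ring_nf
  have hvn : v = (μ ^ n) • v := by
    have := hk n
    rwa [hM, Matrix.one_mulVec] at this
  obtain ⟨j, hj⟩ : ∃ j, v j ≠ 0 := by
    by_contra h
    push_neg at h
    exact hv0 (funext h)
  have : μ ^ n * v j = v j := by
    conv_rhs => rw [hvn]
    rfl
  have := mul_right_cancel₀ hj (this.trans (one_mul (v j)).symm)
  exact this

/-- If `x ^ n = 1`, the character value `χ(x)` is a sum of `finrank` many `n`-th roots of
unity. -/
lemma aux_char_eq_sum {G : Type} [Group G] (V : FDRep ℂ G) (x : G) {n : ℕ}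
    (hx : x ^ n = 1) :
    ∃ S : Multiset ℂ, Multiset.card S = Module.finrank ℂ V ∧
      (∀ μ ∈ S, μ ^ n = 1) ∧ V.character x = S.sum := by
  classical
  let b := Module.finBasis ℂ V
  set M := LinearMap.toMatrix b b (V.ρ x) with hMdef
  have hpow : ∀ k : ℕ, M ^ k = LinearMap.toMatrix b b ((V.ρ x) ^ k) := by
    intro k
    induction k with
    | zero => simp
    | succ k ih => rw [pow_succ, ih, pow_succ, LinearMap.toMatrix_mul]
  have hMn : M ^ n = 1 := by
    rw [hpow n, ← map_pow, hx]
    simp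
  refine ⟨M.charpoly.roots, ?_, fun μ hμ => aux_root_pow_eq_one M hMn hμ, ?_⟩
  · have hsplit := Polynomial.splits_iff_card_roots.mp
      (IsAlgClosed.splits (k := ℂ) M.charpoly)
    rw [hsplit, Matrix.charpoly_natDegree_eq_dim]
    simp [Module.finrank_fin_fun]
  · have h1 : V.character x = LinearMap.trace ℂ V (V.ρ x) := rfl
    rw [h1, LinearMap.trace_eq_matrix_trace ℂ b, ← Matrix.trace_eq_sum_roots_charpoly]

/-- Let `p`, `q` be primes with `p ∣ q - 1`, `G` a non-abelian group of order `p·q`, and `χ` an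
irreducible complex character of `G`.  Then there exist `χ(1)²` elements `g₁, …, g_{χ(1)²}` of
`G` with `χ(g_j g_i⁻¹) = 0` for all `i ≠ j` iff `χ(1) = 1` (the character-level form of:
`V_χ(G)` admits an o*-basis iff `χ` is linear). -/
theorem pq_group_orthogonal_family_iff_linear
    {p q : ℕ} (hp : p.Prime) (hq : q.Prime) (hpq : p ∣ q - 1)
    {G : Type} [Group G] [Finite G]
    (hG : Nat.card G = p * q)
    (hnab : ∃ a b : G, a * b ≠ b * a)
    (V : FDRep ℂ G) [Simple V] :
    (∃ g : Fin ((Module.finrank ℂ V) ^ 2) → G,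
        ∀ i j, i ≠ j → V.character (g j * (g i)⁻¹) = 0) ↔ Module.finrank ℂ V = 1 := by
  classical
  haveI : Fact q.Prime := ⟨hq⟩
  set d := Module.finrank ℂ V with hd
  have hq2 : 2 ≤ q := hq.two_le
  have hp2 : 2 ≤ p := hp.two_le
  have hplt : p < q := by
    have h1 : 1 ≤ q - 1 := by omega
    have := Nat.le_of_dvd (by omega) hpq
    omega
  have hd1 : 0 < d := by
    by_contra h
    have h0 : d = 0 := by omega
    have hsub : Subsingleton V := by
      rw [← Module.finrank_zero_iff (R := ℂ)]
      exact h0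
    apply CategoryTheory.id_nonzero V
    have hall : ∀ f h : V ⟶ V, f = h := by
      intro f h
      apply Action.hom_ext
      ext x
      exact hsub.elim _ _
    exact hall _ _
  constructor
  · rintro ⟨g, hg⟩
    by_contra hne
    have hd2 : 2 ≤ d := by omega
    -- `g` is injective
    have hchar1 : V.character 1 = (d : ℂ) := by
      rw [FDRep.char_one]
    have hinj : Function.Injective g := by
      intro i j hij
      by_contra hne'
      have h0 := hg i j hne'
      rw [hij, mul_inv_cancel, hchar1] at h0
      have hd0 : d = 0 := by exact_mod_cast h0
      omega
    have hdle : d ^ 2 ≤ p * q := by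
      have h := Nat.card_le_card_of_injective g hinj
      simpa [hG] using h
    -- vanishing forces divisibility of the degree
    have horder : ∀ x : G, x ≠ 1 → V.character x = 0 →
        (x ^ p = 1 ∧ p ∣ d) ∨ (x ^ q = 1 ∧ q ∣ d) := by
      intro x hx1 hx0
      have hxdvd : orderOf x ∣ p * q := by rw [← hG]; exact orderOf_dvd_natCard x
      have hnotpq : ¬(p ∣ orderOf x ∧ q ∣ orderOf x) := by
        rintro ⟨hp', hq'⟩
        have hco : Nat.Coprime p q := (Nat.coprime_primes hp hq).mpr (by omega)
        have hdv : p * q ∣ orderOf x := hco.mul_dvd_of_dvd_of_dvd hp' hq'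
        have heq : orderOf x = p * q := Nat.dvd_antisymm hxdvd hdv
        have hcyc : IsCyclic G := isCyclic_of_orderOf_eq_card x (by rw [hG]; exact heq)
        obtain ⟨a, b, hab⟩ := hnab
        letI := hcyc.commGroup
        exact hab (mul_comm a b)
      by_cases hcq : q ∣ orderOf x
      · right
        have hnp : ¬p ∣ orderOf x := fun h => hnotpq ⟨h, hcq⟩
        have hco : Nat.Coprime (orderOf x) p := ((hp.coprime_iff_not_dvd).mpr hnp).symm
        have hdvq : orderOf x ∣ q := by
          have := hxdvd
          rw [mul_comm] at this
          exact hco.dvd_of_dvd_mul_right this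
        have hxq : x ^ q = 1 := orderOf_dvd_iff_pow_eq_one.mp hdvq
        obtain ⟨S, hcard, hroots, hsum⟩ := aux_char_eq_sum V x hxq
        refine ⟨hxq, ?_⟩
        rw [hd, ← hcard]
        exact aux_prime_dvd_card_of_sum_eq_zero hq hroots (by rw [← hsum]; exact hx0)
      · left
        have hco : Nat.Coprime (orderOf x) q := ((hq.coprime_iff_not_dvd).mpr hcq).symm
        have hdvp : orderOf x ∣ p := hco.dvd_of_dvd_mul_right hxdvd
        have hxp : x ^ p = 1 := orderOf_dvd_iff_pow_eq_one.mp hdvp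
        obtain ⟨S, hcard, hroots, hsum⟩ := aux_char_eq_sum V x hxp
        refine ⟨hxp, ?_⟩
        rw [hd, ← hcard]
        exact aux_prime_dvd_card_of_sum_eq_zero hp hroots (by rw [← hsum]; exact hx0)
    -- the degree is not divisible by q
    have hqd : ¬q ∣ d := by
      intro h
      have hqled : q ≤ d := Nat.le_of_dvd (by omega) h
      nlinarith
    -- p divides d
    have hpd : p ∣ d := by
      have h2le : 2 ≤ d ^ 2 := by nlinarith
      have hne01 : (⟨0, by omega⟩ : Fin (d ^ 2)) ≠ ⟨1, by omega⟩ := by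
        intro h
        exact absurd (congrArg Fin.val h) (by simp)
      have hx0 := hg _ _ hne01
      have hxne1 : g (⟨1, by omega⟩ : Fin (d ^ 2)) * (g ⟨0, by omega⟩)⁻¹ ≠ 1 := by
        intro h
        exact hne01 (hinj (mul_inv_eq_one.mp h)).symm
      rcases horder _ hxne1 hx0 with ⟨_, h⟩ | ⟨_, h⟩
      · exact h
      · exact absurd h hqd
    -- the normal Sylow q-subgroup
    obtain ⟨Q⟩ : Nonempty (Sylow q G) := inferInstance
    have hcardQ : Nat.card Q = q := by
      rw [Sylow.card_eq_multiplicity, hG,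
        Nat.factorization_mul (by omega) (by omega)]
      rw [hp.factorization, hq.factorization]
      have hne' : ¬ p = q := by omega
      simp [Finsupp.single_apply, hne']
    have hindexQ : (Q : Subgroup G).index = p := by
      have h := Subgroup.card_mul_index (Q : Subgroup G)
      rw [hcardQ, hG] at h
      have hq0 : 0 < q := by omega
      exact Nat.eq_of_mul_eq_mul_left hq0 (by linarith [h])
    have hsyl1 : Nat.card (Sylow q G) = 1 := by
      have hdvd : Nat.card (Sylow q G) ∣ p := hindexQ ▸ Sylow.card_dvd_index Q
      rcases hp.eq_one_or_self_of_dvd _ hdvd with h | h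
      · exact h
      · exfalso
        have hmod : Nat.card (Sylow q G) ≡ 1 [MOD q] := card_sylow_modEq_one q G
        rw [h] at hmod
        have h1 : p % q = 1 % q := hmod
        rw [Nat.mod_eq_of_lt hplt, Nat.mod_eq_of_lt (by omega)] at h1
        omega
    haveI hss : Subsingleton (Sylow q G) := ((Nat.card_eq_one_iff_unique).mp hsyl1).1
    have hQnormal : (Q : Subgroup G).Normal := by
      rw [← Subgroup.normalizer_eq_top_iff, Subgroup.eq_top_iff']
      intro x
      exact Sylow.smul_eq_iff_mem_normalizer.mp (Subsingleton.elim _ _)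
    -- pigeonhole into the quotient
    have hcardquot : Nat.card (G ⧸ (Q : Subgroup G)) = p := by
      rw [← Subgroup.index_eq_card]
      exact hindexQ
    haveI : Fintype G := Fintype.ofFinite G
    obtain ⟨i, j, hij, hquot⟩ :=
      Fintype.exists_ne_map_eq_of_card_lt
        (fun i : Fin (d ^ 2) => ((g i : G) : G ⧸ (Q : Subgroup G)))
        (by
          rw [Fintype.card_fin, ← Nat.card_eq_fintype_card, hcardquot]
          have hpled : p ≤ d := Nat.le_of_dvd (by omega) hpd
          nlinarith)
    have hmem : (g i)⁻¹ * g j ∈ (Q : Subgroup G) := (QuotientGroup.eq.mp hquot)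
    have hmem' : g j * (g i)⁻¹ ∈ (Q : Subgroup G) := by
      have h := hQnormal.conj_mem _ hmem (g j)
      have heq : g j * ((g i)⁻¹ * g j) * (g j)⁻¹ = g j * (g i)⁻¹ := by group
      rwa [heq] at h
    have hxq : (g j * (g i)⁻¹) ^ q = 1 := by
      have h := (Q : Subgroup G).orderOf_dvd_natCard hmem'
      rw [hcardQ] at h
      exact orderOf_dvd_iff_pow_eq_one.mp h
    have hx0 : V.character (g j * (g i)⁻¹) = 0 := hg i j hij
    have hxne1 : g j * (g i)⁻¹ ≠ 1 := by
      intro h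
      exact hij.symm (hinj (mul_inv_eq_one.mp h))
    rcases horder _ hxne1 hx0 with ⟨hxp, _⟩ | ⟨_, h⟩
    · have h1 : orderOf (g j * (g i)⁻¹) ∣ p := orderOf_dvd_of_pow_eq_one hxp
      have h2 : orderOf (g j * (g i)⁻¹) ∣ q := orderOf_dvd_of_pow_eq_one hxq
      have hco : Nat.Coprime p q := (Nat.coprime_primes hp hq).mpr (by omega)
      have : orderOf (g j * (g i)⁻¹) ∣ 1 := by
        have := Nat.dvd_gcd h1 h2
        rwa [Nat.Coprime.gcd_eq_one hco] at this
      exact hxne1 (orderOf_eq_one_iff.mp (Nat.eq_one_of_dvd_one this))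
    · exact hqd h
  · intro h
    refine ⟨fun _ => 1, fun i j hij => ?_⟩
    exfalso
    apply hij
    have h1 : d ^ 2 = 1 := by simp [h]
    apply Fin.ext
    have hi := i.isLt
    have hj := j.isLt
    omega
end
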